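/- For every complex-valued Schwartz function φ on ℝ, lim_{t→+∞} (1/t) ∫_ℝ (∫₀ᵗ ∫₀ᵗ e^{ix(t₁−t₂)} dt₁ dt₂) φ(x) dx = 2π φ(0). Equivalently, as tempered distributions, (2 − e^{ixt} − e^{−ixt})/(t x²) converges to 2π δ(x) as t → +∞. -/

import Mathlib

open MeasureTheory Filter
open Complex Real

noncomputable def hker (y : ℝ) : ℝ := (2 - 2*Real.cos y)/y^2

lemma hker_nonneg (y : ℝ) : 0 ≤ hker y :=
  div_nonneg (by nlinarith [Real.cos_le_one y]) (sq_nonneg y)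

lemma hker_le (y : ℝ) : hker y ≤ 8/(1+y^2) := by
  rcases eq_or_ne y 0 with rfl | hy
  · simp [hker]
  · have hy2 : 0 < y^2 := by positivity
    have h1 : 2 - 2*Real.cos y ≤ y^2 := by
      have := Real.sin_sq_eq_half_sub (y/2)
      have h2 := Real.sin_sq_le_sq (x := y/2)
      rw [show 2*(y/2) = y by ring] at this
      nlinarith
    have h2 : 2 - 2*Real.cos y ≤ 4 := by nlinarith [Real.neg_one_le_cos y]
    rw [hker, div_le_div_iff₀ hy2 (by positivity)]
    nlinarith [Real.cos_le_one y]

lemma hker_measurable : Measurable hker := by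
  unfold hker
  measurability

lemma hker_abs_le (y : ℝ) : |hker y| ≤ 8/(1+y^2) := by
  rw [_root_.abs_of_nonneg (hker_nonneg y)]; exact hker_le y

lemma integrable_one_add_sq : Integrable (fun y : ℝ => 8/(1+y^2)) := by
  simpa [div_eq_mul_inv] using integrable_inv_one_add_sq.const_mul 8

lemma integrable_hker : Integrable hker := by
  refine Integrable.mono' integrable_one_add_sq ?_ (Filter.Eventually.of_forall ?_)
  · exact hker_measurable.aestronglyMeasurable
  · intro y; simpa [Real.norm_eq_abs] using hker_abs_le y

lemma intJ {c : ℂ} (hc : c ≠ 0) :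
    ∫ s in (0:ℝ)..1, ((1 - s : ℝ) : ℂ) * Complex.exp (-c * s)
      = Complex.exp (-c) / c^2 - 1/c^2 + 1/c := by
  set A : ℂ := 1/c^2 - 1/c with hA
  set B : ℂ := 1/c with hB
  have key : ∀ s : ℝ, HasDerivAt (fun s : ℝ => Complex.exp (-c * s) * (A + B * s))
      (((1 - s : ℝ) : ℂ) * Complex.exp (-c * s)) s := by
    intro s
    have h1 : HasDerivAt (fun z : ℂ => Complex.exp (-c * z) * (A + B * z))
        ((-c) * Complex.exp (-c * s) * (A + B * s) + Complex.exp (-c * s) * B) (s : ℂ) := by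
      have he : HasDerivAt (fun z : ℂ => Complex.exp (-c * z)) ((-c) * Complex.exp (-c * s)) s := by
        simpa [mul_comm] using ((hasDerivAt_id (s:ℂ)).const_mul (-c)).cexp
      have hl : HasDerivAt (fun z : ℂ => A + B * z) B (s : ℂ) := by
        simpa using ((hasDerivAt_id (s:ℂ)).const_mul B).const_add A
      exact he.mul hl
    have h2 := h1.comp_ofReal
    have hcB : c * B = 1 := by rw [hB]; field_simp
    have hAB : B - c * A = 1 := by rw [hA, hB]; field_simp; ring
    convert h2 using 1
    push_cast
    linear_combination (-(Complex.exp (-c*(s:ℂ)))) * hAB + ((s:ℂ) * Complex.exp (-c*(s:ℂ))) * hcB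
  rw [intervalIntegral.integral_eq_sub_of_hasDerivAt (fun s _ => key s)
      (by apply Continuous.intervalIntegrable; continuity)]
  simp only [Complex.ofReal_one, Complex.ofReal_zero, mul_one, mul_zero, Complex.exp_zero]
  have h1 : A + B = 1/c^2 := by rw [hA, hB]; ring
  rw [show Complex.exp (-c) * (A + B) - 1 * (A + 0) = Complex.exp (-c) * (A+B) - A by ring,
    h1, hA, hB]
  ring

noncomputable def tri (s : ℝ) : ℂ := ((max 0 (1 - |s|) : ℝ) : ℂ)

lemma tri_continuous : Continuous tri := by
  unfold tri; fun_prop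

lemma tri_zero_of (s : ℝ) (hs : s ∉ Set.Ioc (-1:ℝ) 1) : tri s = 0 := by
  unfold tri
  have : 1 ≤ |s| := by
    simp only [Set.mem_Ioc, not_and_or, not_lt, not_le] at hs
    rcases hs with h | h
    · rw [abs_of_nonpos (by linarith)]; linarith
    · rw [abs_of_pos (by linarith)]; linarith
  norm_cast
  simp [max_eq_left, sub_nonpos.mpr this]

lemma tri_integrable : Integrable tri := by
  apply tri_continuous.integrable_of_hasCompactSupport
  apply HasCompactSupport.intro (isCompact_Icc (a := (-1:ℝ)) (b := 1))
  intro s hs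
  apply tri_zero_of
  intro h
  exact hs ⟨h.1.le, h.2⟩

lemma sum_aux {c : ℂ} (hc : c ≠ 0) :
    Complex.exp (-c) / c^2 - 1/c^2 + 1/c
      + (Complex.exp c / (-c)^2 - 1/(-c)^2 + 1/(-c))
      = (2 - (Complex.exp c + Complex.exp (-c)))/(-(c^2)) := by
  have h0 : 1/c + 1/(-c) = 0 := by field_simp; ring
  rw [add_comm (Complex.exp c / (-c)^2 - 1/(-c)^2) (1/(-c)), ← add_assoc, add_assoc _ (1/c) _, h0]
  field_simp
  ring

open FourierTransform in
lemma ft_tri {ξ : ℝ} (hξ : ξ ≠ 0) :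
    𝓕 tri ξ = ((hker (2*π*ξ) : ℝ) : ℂ) := by
  set y : ℝ := 2*π*ξ with hydef
  have hy : y ≠ 0 := mul_ne_zero (mul_ne_zero two_ne_zero Real.pi_ne_zero) hξ
  set c : ℂ := (y:ℂ) * I with hcdef
  have hc : c ≠ 0 := mul_ne_zero (by exact_mod_cast hy) I_ne_zero
  set g : ℝ → ℂ := fun v => Complex.exp (↑(-2 * π * v * ξ) * I) • tri v with hg
  have h1 : 𝓕 tri ξ = ∫ v in Set.Ioc (-1:ℝ) 1, g v := by
    rw [Real.fourier_real_eq_integral_exp_smul]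
    rw [setIntegral_eq_integral_of_forall_compl_eq_zero]
    intro s hs
    simp [hg, tri_zero_of s hs]
  have hgc : Continuous g := by
    rw [hg]
    exact (Complex.continuous_exp.comp (by continuity)).smul tri_continuous
  rw [h1, ← intervalIntegral.integral_of_le (by norm_num : (-1:ℝ) ≤ 1),
    ← intervalIntegral.integral_add_adjacent_intervals (a := (-1:ℝ)) (b := 0) (c := 1)
      (hgc.intervalIntegrable _ _) (hgc.intervalIntegrable _ _)]
  have hP1 : ∫ s in (0:ℝ)..1, g s
      = Complex.exp (-c) / c^2 - 1/c^2 + 1/c := by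
    rw [← intJ hc]
    apply intervalIntegral.integral_congr
    intro s hs
    rw [Set.uIcc_of_le (by norm_num : (0:ℝ) ≤ 1)] at hs
    have habs : |s| = s := abs_of_nonneg hs.1
    have hmax : max 0 (1 - |s|) = 1 - s := by rw [habs]; exact max_eq_right (by linarith [hs.2])
    simp only [hg, tri, hmax, smul_eq_mul]
    rw [mul_comm]
    congr 1
    push_cast [hydef, hcdef]
    ring
  have hP2 : ∫ s in (-1:ℝ)..0, g s
      = Complex.exp c / (-c)^2 - 1/(-c)^2 + 1/(-c) := by
    have hneg := intervalIntegral.integral_comp_neg (a := (0:ℝ)) (b := 1) g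
    simp only [neg_zero, neg_neg] at hneg
    rw [← hneg, show Complex.exp c = Complex.exp (-(-c)) by rw [neg_neg],
      ← intJ (neg_ne_zero.mpr hc)]
    apply intervalIntegral.integral_congr
    intro s hs
    rw [Set.uIcc_of_le (by norm_num : (0:ℝ) ≤ 1)] at hs
    have habs : |(-s)| = s := by rw [abs_neg]; exact abs_of_nonneg hs.1
    have hmax : max 0 (1 - |(-s)|) = 1 - s := by
      rw [habs]; exact max_eq_right (by linarith [hs.2])
    simp only [hg, tri, hmax, smul_eq_mul]
    rw [mul_comm]
    congr 1
    push_cast [hydef, hcdef]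
    ring
  rw [hP1, hP2]
  have hsum := sum_aux hc
  have hcos : Complex.exp c + Complex.exp (-c) = 2 * Complex.cos (y:ℂ) := by
    rw [hcdef, ← neg_mul, ← Complex.two_cos]
  have hc2 : -(c^2) = ((y:ℂ))^2 := by rw [hcdef]; simp [mul_pow, Complex.I_sq]
  rw [add_comm] at hsum
  rw [hsum, hcos, hc2, hker]
  push_cast
  ring

open FourierTransform in
lemma integral_hker : ∫ y : ℝ, hker y = 2 * π := by
  have h2pi : (2*π : ℝ) ≠ 0 := by positivity
  have hcomp : Integrable (fun ξ : ℝ => hker (2*π*ξ)) :=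
    integrable_hker.comp_mul_left' h2pi
  have hane : ∀ᵐ ξ : ℝ, ξ ≠ 0 := by
    rw [ae_iff]
    simpa using measure_singleton (0:ℝ)
  have hae : (𝓕 tri) =ᵐ[volume] fun ξ => ((hker (2*π*ξ) : ℝ) : ℂ) := by
    filter_upwards [hane] with ξ hξ
    exact ft_tri hξ
  have hFint : Integrable (𝓕 tri) := (hcomp.ofReal).congr hae.symm
  have hinv := tri_integrable.fourierInv_fourier_eq hFint (v := 0) tri_continuous.continuousAt
  have h00 : tri 0 = 1 := by simp [tri]
  have hinv0 : 𝓕⁻ (𝓕 tri) 0 = ∫ ξ, 𝓕 tri ξ := by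
    rw [Real.fourierInv_eq]
    simp
  have hint : ∫ ξ, 𝓕 tri ξ = ((∫ ξ : ℝ, hker (2*π*ξ)) : ℝ) := by
    rw [integral_congr_ae hae]
    exact integral_ofReal
  have hscale : ∫ ξ : ℝ, hker (2*π*ξ) = |(2*π)⁻¹| * ∫ y, hker y := by
    simpa [smul_eq_mul] using MeasureTheory.Measure.integral_comp_mul_left hker (2*π)
  rw [h00, hinv0, hint] at hinv
  rw [hscale] at hinv
  have : |(2*π)⁻¹| * ∫ y, hker y = 1 := by exact_mod_cast hinv
  rw [abs_of_pos (by positivity)] at this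
  field_simp at this
  linarith

lemma ae_ne_zero : ∀ᵐ x : ℝ, x ≠ 0 := by
  rw [ae_iff]
  simpa using measure_singleton (0:ℝ)

lemma alg_aux {x t : ℝ} (hx : x ≠ 0) :
    (Complex.exp ((Complex.I*x)*t) - 1)/(Complex.I*x)
      * ((Complex.exp ((-(Complex.I*x))*t) - 1)/(-(Complex.I*x)))
      = (((2 - 2*Real.cos (t*x)) / x^2 : ℝ) : ℂ) := by
  have hx' : (x:ℂ) ≠ 0 := by exact_mod_cast hx
  have hprod : Complex.exp ((Complex.I*x)*t) * Complex.exp ((-(Complex.I*x))*t) = 1 := by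
    rw [← Complex.exp_add, show (Complex.I*(x:ℂ))*t + (-(Complex.I*x))*t = 0 by ring,
      Complex.exp_zero]
  have hcos : Complex.exp ((Complex.I*x)*t) + Complex.exp ((-(Complex.I*x))*t)
      = 2 * Complex.cos ((t:ℂ)*(x:ℂ)) := by
    rw [show (Complex.I*(x:ℂ))*t = ((t:ℂ)*x)*Complex.I by ring,
      show (-(Complex.I*(x:ℂ)))*t = -((t:ℂ)*x)*Complex.I by ring, ← Complex.two_cos]
  rw [div_mul_div_comm,
    show (Complex.I*(x:ℂ)) * (-(Complex.I*x)) = (x:ℂ)^2 by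
      linear_combination (-((x:ℂ)^2)) * Complex.I_sq,
    show (Complex.exp ((Complex.I*(x:ℂ))*t) - 1) * (Complex.exp ((-(Complex.I*(x:ℂ)))*t) - 1)
      = (2:ℂ) - 2*Complex.cos ((t:ℂ)*(x:ℂ)) by linear_combination hprod - hcos]
  push_cast
  ring

lemma inner_double {x t : ℝ} (hx : x ≠ 0) :
    (∫ t₁ in (0:ℝ)..t, ∫ t₂ in (0:ℝ)..t,
        Complex.exp (Complex.I * (x : ℂ) * ((t₁ : ℂ) - (t₂ : ℂ))))
      = (((2 - 2*Real.cos (t*x)) / x^2 : ℝ) : ℂ) := by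
  have hxC : (Complex.I*(x:ℂ)) ≠ 0 := mul_ne_zero Complex.I_ne_zero (by exact_mod_cast hx)
  have he : ∀ t₁ t₂ : ℝ, Complex.exp (Complex.I * (x:ℂ) * ((t₁:ℂ) - (t₂:ℂ)))
      = Complex.exp ((Complex.I*(x:ℂ)) * (t₁:ℂ)) * Complex.exp ((-(Complex.I*(x:ℂ))) * (t₂:ℂ)) := by
    intro t₁ t₂
    rw [← Complex.exp_add]
    ring_nf
  simp_rw [he, intervalIntegral.integral_const_mul, intervalIntegral.integral_mul_const,
    integral_exp_mul_complex hxC, integral_exp_mul_complex (neg_ne_zero.2 hxC)]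
  rw [show ((0:ℝ):ℂ) = (0:ℂ) by norm_num]
  simp only [mul_zero, Complex.exp_zero]
  exact alg_aux hx

/-- As tempered distributions, `(1/t)∫₀ᵗ∫₀ᵗ e^{ix(t₁−t₂)} dt₁ dt₂` converges to `2π δ(x)`
as `t → +∞`: paired with a Schwartz function `φ` it tends to `2π φ(0)`. -/
theorem cesaro_double_time_integral_tendsto_two_pi_delta (φ : SchwartzMap ℝ ℂ) :
    Tendsto (fun t : ℝ =>
        (1 / (t : ℂ)) * ∫ x : ℝ,
          (∫ t₁ in (0:ℝ)..t, ∫ t₂ in (0:ℝ)..t,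
            Complex.exp (Complex.I * (x : ℂ) * ((t₁ : ℂ) - (t₂ : ℂ)))) * φ x)
      atTop (nhds ((2 * Real.pi : ℝ) * φ 0)) := by
  obtain ⟨C, hC⟩ := φ.decay 0 0
  have hC' : ∀ x, ‖φ x‖ ≤ C := by
    intro x
    simpa [norm_iteratedFDeriv_zero] using hC.2 x
  set G : ℝ → ℂ := fun t => ∫ y : ℝ, ((hker y : ℝ) : ℂ) * φ (y/t) with hG
  have hmeas : ∀ t : ℝ, AEStronglyMeasurable (fun y : ℝ => ((hker y : ℝ):ℂ) * φ (y/t)) volume := by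
    intro t
    exact ((Complex.measurable_ofReal.comp hker_measurable).aestronglyMeasurable).mul
      (φ.continuous.comp (continuous_id.div_const t)).aestronglyMeasurable
  have hTend : Tendsto G atTop (nhds (∫ y : ℝ, ((hker y : ℝ):ℂ) * φ 0)) := by
    rw [hG]
    apply tendsto_integral_filter_of_dominated_convergence (fun y => (8/(1+y^2)) * C)
    · exact Filter.Eventually.of_forall hmeas
    · apply Filter.Eventually.of_forall; intro t
      apply Filter.Eventually.of_forall; intro y
      rw [norm_mul]
      have h1 : ‖((hker y : ℝ):ℂ)‖ ≤ 8/(1+y^2) := by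
        rw [Complex.norm_real, Real.norm_eq_abs]
        exact hker_abs_le y
      exact mul_le_mul h1 (hC' _) (norm_nonneg _) (by positivity)
    · exact integrable_one_add_sq.mul_const C
    · apply Filter.Eventually.of_forall; intro y
      apply Tendsto.const_mul
      have h1 : Tendsto (fun t : ℝ => y / t) atTop (nhds 0) := by
        simpa [div_eq_mul_inv] using tendsto_inv_atTop_zero.const_mul y
      exact (φ.continuous.continuousAt.tendsto).comp h1
  have hval : (∫ y : ℝ, ((hker y : ℝ):ℂ) * φ 0) = (((2 * Real.pi : ℝ)) : ℂ) * φ 0 := by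
    have h2 : (fun y : ℝ => ((hker y : ℝ):ℂ) * φ 0) = fun y : ℝ => (hker y) • φ 0 := by
      funext y
      rw [Complex.real_smul]
    rw [h2, integral_smul_const, integral_hker, Complex.real_smul]
  rw [hval] at hTend
  refine Tendsto.congr' ?_ hTend
  filter_upwards [eventually_gt_atTop (0:ℝ)] with t ht
  have htC : (t:ℂ) ≠ 0 := by exact_mod_cast ht.ne'
  have step1 : G t = (1 / (t:ℂ)) * ∫ x : ℝ,
      (∫ t₁ in (0:ℝ)..t, ∫ t₂ in (0:ℝ)..t,
        Complex.exp (Complex.I * (x : ℂ) * ((t₁ : ℂ) - (t₂ : ℂ)))) * φ x := by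
    have hcongr : ∫ x : ℝ, (∫ t₁ in (0:ℝ)..t, ∫ t₂ in (0:ℝ)..t,
          Complex.exp (Complex.I * (x : ℂ) * ((t₁ : ℂ) - (t₂ : ℂ)))) * φ x
        = ∫ x : ℝ, ((t:ℂ)^2) * (((hker (t*x) : ℝ):ℂ) * φ (t*x/t)) := by
      apply integral_congr_ae
      filter_upwards [ae_ne_zero] with x hx
      rw [inner_double hx]
      have hs : ((2 - 2*Real.cos (t*x)) / x^2 : ℝ) = t^2 * hker (t*x) := by
        rw [hker]
        field_simp
      rw [hs, mul_div_cancel_left₀ x ht.ne']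
      push_cast
      ring
    rw [hcongr, MeasureTheory.integral_const_mul,
      MeasureTheory.Measure.integral_comp_mul_left (fun y => ((hker y : ℝ):ℂ) * φ (y/t)) t,
      abs_of_pos (inv_pos.2 ht), Complex.real_smul]
    push_cast
    rw [hG]
    field_simp
  exact step1
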